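/- Define E_1(φ) = (2/π) ∫_0^{π/2} ∫_0^{π/2} sin(2θ_B) · sign(sin(θ_B + θ_C - φ)) dθ_B dθ_C. Then E_1(φ) = (32/π²) Σ_{n≥0} [1/((2n+1)²(4-(2n+1)²))] cos((2n+1)φ). -/

import Mathlib

open Real intervalIntegral


lemma hasSum_C {ψ : ℝ} (h0 : 0 ≤ ψ) (h1 : ψ ≤ 2 * π) :
    HasSum (fun n : ℕ => 1 / (n : ℝ) ^ 2 * Real.cos (n * ψ))
      (ψ ^ 2 / 4 - π * ψ / 2 + π ^ 2 / 6) := by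
  have hπ := Real.pi_pos
  have hx : ψ / (2 * π) ∈ Set.Icc (0 : ℝ) 1 := by
    constructor
    · positivity
    · rw [div_le_one (by positivity)]; exact h1
  have h := hasSum_one_div_nat_pow_mul_cos (k := 1) one_ne_zero hx
  have heval : (Polynomial.map (algebraMap ℚ ℝ) (Polynomial.bernoulli 2)).eval (ψ / (2 * π))
      = (ψ / (2*π))^2 - ψ/(2*π) + 1/6 := by
    simp [Polynomial.bernoulli, Finset.sum_range_succ, Polynomial.eval_finset_sum]
    norm_num [bernoulli, bernoulli'_one, bernoulli'_two]
    ring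
  rw [heval] at h
  have hval : ((-1:ℝ)) ^ (1 + 1) * (2 * π) ^ (2 * 1) / 2 / (2 * 1).factorial *
      ((ψ / (2 * π)) ^ 2 - ψ / (2 * π) + 1 / 6) = ψ ^ 2 / 4 - π * ψ / 2 + π ^ 2 / 6 := by
    have : ((2 * 1 : ℕ).factorial : ℝ) = 2 := by norm_num [Nat.factorial]
    rw [this]
    field_simp
    ring
  rw [hval] at h
  have hfun : (fun n : ℕ => 1 / (n : ℝ) ^ 2 * Real.cos (n * ψ))
      = fun n : ℕ => 1 / (n : ℝ) ^ (2 * 1) * Real.cos (2 * π * n * (ψ / (2 * π))) := by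
    funext n
    have harg : 2 * π * (n:ℝ) * (ψ / (2 * π)) = n * ψ := by field_simp
    rw [harg]
  rw [hfun]
  exact h

/-- Fourier series of the triangle wave: `∑ cos((2n+1)φ)/(2n+1)² = π²/8 - πφ/4` on `[0, π]`. -/
lemma hasSum_A {φ : ℝ} (h0 : 0 ≤ φ) (h1 : φ ≤ π) :
    HasSum (fun n : ℕ => 1 / (2 * (n : ℝ) + 1) ^ 2 * Real.cos ((2 * n + 1) * φ))
      (π ^ 2 / 8 - π * φ / 4) := by
  have hπ := Real.pi_pos
  set f : ℕ → ℝ := fun n => 1 / (n : ℝ) ^ 2 * Real.cos (n * φ) with hf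
  have hS : HasSum f (φ ^ 2 / 4 - π * φ / 2 + π ^ 2 / 6) := hasSum_C h0 (by linarith)
  have hC2 : HasSum (fun n : ℕ => 1 / (n : ℝ) ^ 2 * Real.cos (n * (2 * φ)))
      ((2*φ) ^ 2 / 4 - π * (2*φ) / 2 + π ^ 2 / 6) := hasSum_C (by linarith) (by linarith)
  have hE : HasSum (fun n : ℕ => f (2 * n))
      ((1/4) * ((2*φ) ^ 2 / 4 - π * (2*φ) / 2 + π ^ 2 / 6)) := by
    have h4 := hC2.mul_left (1/4)
    have : (fun n : ℕ => f (2 * n))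
        = fun n : ℕ => (1/4) * (1 / (n : ℝ) ^ 2 * Real.cos (n * (2 * φ))) := by
      funext n
      have : ((2 * n : ℕ) : ℝ) = 2 * (n : ℝ) := by push_cast; ring
      simp only [hf, this]
      have harg : 2 * (n:ℝ) * φ = (n:ℝ) * (2 * φ) := by ring
      rw [harg, mul_pow]
      rw [one_div, mul_inv, one_div, one_div]
      norm_num
      ring
    rw [this]
    exact h4
  obtain ⟨x, hx⟩ : Summable fun n : ℕ => f (2 * n + 1) :=
    hS.summable.comp_injective (fun a b h => by omega)
  have hadd := hE.even_add_odd hx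
  have hxval : x = π ^ 2 / 8 - π * φ / 4 := by
    have := hS.unique hadd
    nlinarith [this]
  rw [hxval] at hx
  have : (fun n : ℕ => f (2 * n + 1))
      = fun n : ℕ => 1 / (2 * (n : ℝ) + 1) ^ 2 * Real.cos ((2 * n + 1) * φ) := by
    funext n
    simp only [hf]
    push_cast
    ring_nf
  rwa [this] at hx

noncomputable def aco (n : ℕ) : ℝ := 1 / ((2 * (n:ℝ) + 1) ^ 2 * (4 - (2 * (n:ℝ) + 1) ^ 2))

lemma ksq_ne (n : ℕ) : ((2 * (n:ℝ) + 1) ^ 2) ≠ 0 := by positivity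

lemma four_sub_ne (n : ℕ) : (4 - (2 * (n:ℝ) + 1) ^ 2) ≠ 0 := by
  rcases n with _ | m
  · norm_num
  · have hm : (0:ℝ) ≤ (m:ℝ) := Nat.cast_nonneg m
    push_cast
    nlinarith

lemma abs_bound_t (n : ℕ) : |1 / (4 - (2 * (n:ℝ) + 1) ^ 2)| ≤ 3 * (1 / (2 * (n:ℝ) + 1) ^ 2) := by
  rcases n with _ | m
  · rw [abs_of_nonneg (by norm_num)]; norm_num
  · have hm : (0:ℝ) ≤ (m:ℝ) := Nat.cast_nonneg m
    push_cast
    have hneg : (4 - (2 * ((m:ℝ)+1) + 1) ^ 2) < 0 := by nlinarith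
    rw [abs_of_nonpos (by
      apply div_nonpos_of_nonneg_of_nonpos
      · norm_num
      · linarith)]
    rw [← neg_div, div_le_iff_of_neg hneg, mul_one_div, div_mul_eq_mul_div,
      div_le_iff₀ (by positivity)]
    nlinarith [sq_nonneg ((m:ℝ)+1)]

lemma summable_inv_odd_sq : Summable (fun n : ℕ => 1 / (2 * (n:ℝ) + 1) ^ 2) := by
  have hinj : Function.Injective (fun n : ℕ => 2 * n + 1) := fun a b h => by simpa using h
  have h := hasSum_zeta_two.summable.comp_injective hinj
  refine h.congr fun n => ?_
  simp only [Function.comp]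
  push_cast
  ring_nf

lemma partial_sum_t (N : ℕ) :
    ∑ n ∈ Finset.range N, (1 / (4 - (2 * (n:ℝ) + 1) ^ 2))
      = (1/4) * (1 / (2 * (N:ℝ) - 1) + 1 / (2 * (N:ℝ) + 1)) := by
  induction N with
  | zero => push_cast; norm_num
  | succ M ih =>
    rw [Finset.sum_range_succ, ih]
    have h1 : (2 * (M:ℝ) - 1) ≠ 0 := by
      rcases M with _ | K
      · norm_num
      · have : (0:ℝ) ≤ (K:ℝ) := Nat.cast_nonneg K
        push_cast; nlinarith
    have h2 : (2 * (M:ℝ) + 1) ≠ 0 := by positivity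
    have h3 : (2 * (M:ℝ) + 3) ≠ 0 := by positivity
    have h4 := four_sub_ne M
    have h1' : (-1 + (M:ℝ)*2) ≠ 0 := fun h => h1 (by linarith)
    have h2' : (1 + (M:ℝ)*2) ≠ 0 := fun h => h2 (by linarith)
    have h3' : (3 + (M:ℝ)*2) ≠ 0 := fun h => h3 (by linarith)
    push_cast
    have e1 : (4 - (2*(M:ℝ)+1)^2) = -((2*(M:ℝ)-1)*(2*(M:ℝ)+3)) := by ring
    rw [e1]
    rw [div_neg]
    have h5 : (2*((M:ℝ)+1)-1) ≠ 0 := fun h => h2 (by linarith)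
    have h6 : (2*((M:ℝ)+1)+1) ≠ 0 := fun h => h3 (by linarith)
    field_simp [h1, h2, h3, h5, h6]
    ring

lemma hasSum_t_zero : HasSum (fun n : ℕ => 1 / (4 - (2 * (n:ℝ) + 1) ^ 2)) 0 := by
  have hsumm : Summable (fun n : ℕ => 1 / (4 - (2 * (n:ℝ) + 1) ^ 2)) := by
    apply Summable.of_norm_bounded (summable_inv_odd_sq.mul_left 3)
    intro n
    rw [Real.norm_eq_abs]
    exact abs_bound_t n
  rw [hsumm.hasSum_iff_tendsto_nat]
  have hfun : (fun N : ℕ => ∑ n ∈ Finset.range N, (1 / (4 - (2 * (n:ℝ) + 1) ^ 2)))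
      = fun N : ℕ => (1/4) * (1 / (2 * (N:ℝ) - 1) + 1 / (2 * (N:ℝ) + 1)) := by
    funext N; exact partial_sum_t N
  rw [hfun]
  have t1 : Filter.Tendsto (fun N : ℕ => 2 * (N:ℝ) - 1) Filter.atTop Filter.atTop := by
    apply Filter.tendsto_atTop_add_const_right
    exact (tendsto_natCast_atTop_atTop).const_mul_atTop (by norm_num)
  have t2 : Filter.Tendsto (fun N : ℕ => 2 * (N:ℝ) + 1) Filter.atTop Filter.atTop := by
    apply Filter.tendsto_atTop_add_const_right
    exact (tendsto_natCast_atTop_atTop).const_mul_atTop (by norm_num)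
  have := ((t1.inv_tendsto_atTop).add (t2.inv_tendsto_atTop)).const_mul (1/4 : ℝ)
  simpa [one_div] using this

lemma hasSum_odd_sq_pi : HasSum (fun n : ℕ => 1 / (2 * (n:ℝ) + 1) ^ 2) (π ^ 2 / 8) := by
  have h := hasSum_A (le_refl 0) Real.pi_pos.le
  simp only [mul_zero, Real.cos_zero, mul_one] at h
  norm_num at h
  simpa [one_div] using h

lemma hasSum_aco : HasSum aco (π ^ 2 / 32) := by
  have h := ((hasSum_odd_sq_pi.add hasSum_t_zero).mul_left (1/4))
  have hfun : (fun n : ℕ => (1/4) * (1 / (2 * (n:ℝ) + 1) ^ 2 + 1 / (4 - (2 * (n:ℝ) + 1) ^ 2)))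
      = aco := by
    funext n
    have h1 := ksq_ne n
    have h2 := four_sub_ne n
    have h2' := four_sub_ne n
    rw [div_add_div _ _ h1 h2']
    have e : (1*(4 - (2 * (n:ℝ) + 1) ^ 2) + (2 * (n:ℝ) + 1) ^ 2 * 1) = 4 := by ring
    rw [e]
    unfold aco
    rw [eq_div_iff (mul_ne_zero h1 h2')]
    field_simp
  rw [hfun] at h
  rw [show π ^ 2 / 32 = 1/4 * (π^2/8 + 0) by ring]
  exact h

-- the series functions
noncomputable def Wf (φ : ℝ) : ℝ := ∑' n : ℕ, aco n * Real.cos ((2 * (n:ℝ) + 1) * φ)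
noncomputable def Wf1 (φ : ℝ) : ℝ :=
  ∑' n : ℕ, (-(aco n * (2 * (n:ℝ) + 1))) * Real.sin ((2 * (n:ℝ) + 1) * φ)
noncomputable def Wf2 (φ : ℝ) : ℝ :=
  ∑' n : ℕ, (-(aco n * (2 * (n:ℝ) + 1) ^ 2)) * Real.cos ((2 * (n:ℝ) + 1) * φ)

lemma k_ge_one (n : ℕ) : (1:ℝ) ≤ 2 * (n:ℝ) + 1 := by
  have := Nat.cast_nonneg (α := ℝ) n; linarith

lemma aco_k2_bound (n : ℕ) : |aco n * (2 * (n:ℝ) + 1) ^ 2| ≤ 3 * (1 / (2 * (n:ℝ) + 1) ^ 2) := by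
  have h1 := ksq_ne n
  have : aco n * (2 * (n:ℝ) + 1) ^ 2 = 1 / (4 - (2 * (n:ℝ) + 1) ^ 2) := by
    rw [show aco n = (1/((2 * (n:ℝ) + 1)^2)) * (1/(4 - (2 * (n:ℝ) + 1)^2)) from by
      unfold aco; rw [one_div_mul_one_div]]
    rw [mul_right_comm, one_div ((2 * (n:ℝ) + 1)^2), inv_mul_cancel₀ h1, one_mul]
  rw [this]
  exact abs_bound_t n

lemma aco_k_bound (n : ℕ) : |aco n * (2 * (n:ℝ) + 1)| ≤ 3 * (1 / (2 * (n:ℝ) + 1) ^ 2) := by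
  have hk := k_ge_one n
  have hk0 : (0:ℝ) < 2 * (n:ℝ) + 1 := by linarith
  calc |aco n * (2 * (n:ℝ) + 1)| = |aco n * (2 * (n:ℝ) + 1) ^ 2| / (2 * (n:ℝ) + 1) := by
        rw [abs_mul, abs_mul, abs_of_nonneg hk0.le, abs_of_nonneg (by positivity : (0:ℝ) ≤ (2 * (n:ℝ) + 1)^2)]
        field_simp
    _ ≤ |aco n * (2 * (n:ℝ) + 1) ^ 2| / 1 := by
        apply div_le_div_of_nonneg_left (abs_nonneg _) (by norm_num) hk |>.trans_eq rfl
    _ ≤ 3 * (1 / (2 * (n:ℝ) + 1) ^ 2) := by rw [div_one]; exact aco_k2_bound n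

lemma aco_bound (n : ℕ) : |aco n| ≤ 3 * (1 / (2 * (n:ℝ) + 1) ^ 2) := by
  have hk := k_ge_one n
  have : |aco n| ≤ |aco n * (2 * (n:ℝ) + 1)| := by
    rw [abs_mul]
    nth_rewrite 1 [← mul_one |aco n|]
    apply mul_le_mul_of_nonneg_left _ (abs_nonneg _)
    rw [abs_of_nonneg (by linarith)]; exact hk
  exact this.trans (aco_k_bound n)

lemma summable_bound : Summable (fun n : ℕ => 3 * (1 / (2 * (n:ℝ) + 1) ^ 2)) :=
  summable_inv_odd_sq.mul_left 3

lemma hasDerivAt_Wf (y : ℝ) : HasDerivAt Wf (Wf1 y) y := by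
  unfold Wf Wf1
  have key := hasDerivAt_tsum (u := fun n : ℕ => 3 * (1 / (2 * (n:ℝ) + 1) ^ 2)) summable_bound
    (g := fun n z => aco n * Real.cos ((2 * (n:ℝ) + 1) * z))
    (g' := fun n z => (-(aco n * (2 * (n:ℝ) + 1))) * Real.sin ((2 * (n:ℝ) + 1) * z))
    (y₀ := 0) ?_ ?_ ?_
  · exact key y
  · intro n z
    have h1 : HasDerivAt (fun z : ℝ => (2 * (n:ℝ) + 1) * z) (2 * (n:ℝ) + 1) z := by
      simpa using (hasDerivAt_id z).const_mul (2 * (n:ℝ) + 1)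
    have h2 := (Real.hasDerivAt_cos ((2 * (n:ℝ) + 1) * z)).comp z h1
    have h3 := h2.const_mul (aco n)
    exact h3.congr_deriv (by ring)
  · intro n z
    rw [Real.norm_eq_abs, abs_mul, abs_neg]
    calc |aco n * (2 * (n:ℝ) + 1)| * |Real.sin ((2 * (n:ℝ) + 1) * z)|
        ≤ |aco n * (2 * (n:ℝ) + 1)| * 1 :=
          mul_le_mul_of_nonneg_left (Real.abs_sin_le_one _) (abs_nonneg _)
      _ ≤ 3 * (1 / (2 * (n:ℝ) + 1) ^ 2) := by rw [mul_one]; exact aco_k_bound n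
  · apply Summable.of_norm_bounded summable_bound
    intro n
    rw [Real.norm_eq_abs, abs_mul]
    calc |aco n| * |Real.cos ((2 * (n:ℝ) + 1) * 0)| ≤ |aco n| * 1 :=
          mul_le_mul_of_nonneg_left (Real.abs_cos_le_one _) (abs_nonneg _)
      _ ≤ 3 * (1 / (2 * (n:ℝ) + 1) ^ 2) := by rw [mul_one]; exact aco_bound n

lemma hasDerivAt_Wf1 (y : ℝ) : HasDerivAt Wf1 (Wf2 y) y := by
  unfold Wf1 Wf2
  have key := hasDerivAt_tsum (u := fun n : ℕ => 3 * (1 / (2 * (n:ℝ) + 1) ^ 2)) summable_bound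
    (g := fun n z => (-(aco n * (2 * (n:ℝ) + 1))) * Real.sin ((2 * (n:ℝ) + 1) * z))
    (g' := fun n z => (-(aco n * (2 * (n:ℝ) + 1) ^ 2)) * Real.cos ((2 * (n:ℝ) + 1) * z))
    (y₀ := 0) ?_ ?_ ?_
  · exact key y
  · intro n z
    have h1 : HasDerivAt (fun z : ℝ => (2 * (n:ℝ) + 1) * z) (2 * (n:ℝ) + 1) z := by
      simpa using (hasDerivAt_id z).const_mul (2 * (n:ℝ) + 1)
    have h2 := (Real.hasDerivAt_sin ((2 * (n:ℝ) + 1) * z)).comp z h1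
    have h3 := h2.const_mul (-(aco n * (2 * (n:ℝ) + 1)))
    exact h3.congr_deriv (by ring)
  · intro n z
    rw [Real.norm_eq_abs, abs_mul, abs_neg]
    calc |aco n * (2 * (n:ℝ) + 1) ^ 2| * |Real.cos ((2 * (n:ℝ) + 1) * z)|
        ≤ |aco n * (2 * (n:ℝ) + 1) ^ 2| * 1 :=
          mul_le_mul_of_nonneg_left (Real.abs_cos_le_one _) (abs_nonneg _)
      _ ≤ 3 * (1 / (2 * (n:ℝ) + 1) ^ 2) := by rw [mul_one]; exact aco_k2_bound n
  · apply Summable.of_norm_bounded summable_bound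
    intro n
    simp [Real.norm_eq_abs]
    positivity

lemma summable_Wf (φ : ℝ) : Summable (fun n : ℕ => aco n * Real.cos ((2 * (n:ℝ) + 1) * φ)) := by
  apply Summable.of_norm_bounded summable_bound
  intro n
  rw [Real.norm_eq_abs, abs_mul]
  calc |aco n| * |Real.cos ((2 * (n:ℝ) + 1) * φ)| ≤ |aco n| * 1 :=
        mul_le_mul_of_nonneg_left (Real.abs_cos_le_one _) (abs_nonneg _)
    _ ≤ 3 * (1 / (2 * (n:ℝ) + 1) ^ 2) := by rw [mul_one]; exact aco_bound n

lemma summable_Wf2 (φ : ℝ) :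
    Summable (fun n : ℕ => (-(aco n * (2 * (n:ℝ) + 1) ^ 2)) * Real.cos ((2 * (n:ℝ) + 1) * φ)) := by
  apply Summable.of_norm_bounded summable_bound
  intro n
  rw [Real.norm_eq_abs, abs_mul, abs_neg]
  calc |aco n * (2 * (n:ℝ) + 1) ^ 2| * |Real.cos ((2 * (n:ℝ) + 1) * φ)|
      ≤ |aco n * (2 * (n:ℝ) + 1) ^ 2| * 1 :=
        mul_le_mul_of_nonneg_left (Real.abs_cos_le_one _) (abs_nonneg _)
    _ ≤ 3 * (1 / (2 * (n:ℝ) + 1) ^ 2) := by rw [mul_one]; exact aco_k2_bound n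

/-- The ODE relation `W'' + 4W = π²/8 - πφ/4` on `[0, π]`. -/
lemma Wf2_add_four_Wf {φ : ℝ} (h0 : 0 ≤ φ) (h1 : φ ≤ π) :
    Wf2 φ + 4 * Wf φ = π ^ 2 / 8 - π * φ / 4 := by
  have hfun : (fun n : ℕ =>
      (-(aco n * (2 * (n:ℝ) + 1) ^ 2)) * Real.cos ((2 * (n:ℝ) + 1) * φ)
        + 4 * (aco n * Real.cos ((2 * (n:ℝ) + 1) * φ)))
      = fun n : ℕ => 1 / (2 * (n:ℝ) + 1) ^ 2 * Real.cos ((2 * (n:ℝ) + 1) * φ) := by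
    funext n
    have h1' := ksq_ne n
    have h2' := four_sub_ne n
    have hco : (-(aco n * (2 * (n:ℝ) + 1) ^ 2)) + 4 * aco n = 1 / (2 * (n:ℝ) + 1) ^ 2 := by
      unfold aco
      field_simp
      ring
    calc (-(aco n * (2 * (n:ℝ) + 1) ^ 2)) * Real.cos ((2 * (n:ℝ) + 1) * φ)
          + 4 * (aco n * Real.cos ((2 * (n:ℝ) + 1) * φ))
        = ((-(aco n * (2 * (n:ℝ) + 1) ^ 2)) + 4 * aco n) * Real.cos ((2 * (n:ℝ) + 1) * φ) := by
          ring
      _ = 1 / (2 * (n:ℝ) + 1) ^ 2 * Real.cos ((2 * (n:ℝ) + 1) * φ) := by rw [hco]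
  unfold Wf2 Wf
  rw [← tsum_mul_left, ← Summable.tsum_add (summable_Wf2 φ) ((summable_Wf φ).mul_left 4), hfun]
  exact (hasSum_A h0 h1).tsum_eq

/-- The series closed form on `[0, π]`. -/
lemma Wf_eq {φ : ℝ} (h0 : 0 ≤ φ) (h1 : φ ≤ π) :
    Wf φ = π ^ 2 / 32 - π * φ / 16 + (π / 32) * Real.sin (2 * φ) := by
  set T : ℝ → ℝ := fun y => π ^ 2 / 32 - π * y / 16 + (π / 32) * Real.sin (2 * y) with hT
  set D : ℝ → ℝ := fun y => Wf y - T y with hD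
  set D1 : ℝ → ℝ := fun y => Wf1 y - (-(π / 16) + (π / 16) * Real.cos (2 * y)) with hD1
  have hTd : ∀ y : ℝ, HasDerivAt T (-(π / 16) + (π / 16) * Real.cos (2 * y)) y := by
    intro y
    have hs : HasDerivAt (fun y : ℝ => Real.sin (2 * y)) (Real.cos (2 * y) * 2) y := by
      have h2 : HasDerivAt (fun y : ℝ => 2 * y) 2 y := by simpa using (hasDerivAt_id y).const_mul 2
      exact (Real.hasDerivAt_sin (2 * y)).comp y h2
    have hlin : HasDerivAt (fun y : ℝ => π ^ 2 / 32 - π * y / 16) (-(π / 16)) y := by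
      have := ((hasDerivAt_id y).const_mul (π / 16)).const_sub (π ^ 2 / 32)
      have hfe : (fun y : ℝ => π ^ 2 / 32 - π * y / 16) = fun x => π ^ 2 / 32 - π / 16 * id x := by
        funext z; simp only [id_eq]; ring
      rw [hfe]; exact this.congr_deriv (by ring)
    have := hlin.add (hs.const_mul (π / 32))
    exact this.congr_deriv (by ring)
  have hDd : ∀ y : ℝ, HasDerivAt D (D1 y) y := fun y => (hasDerivAt_Wf y).sub (hTd y)
  have hD1d : ∀ y : ℝ, HasDerivAt D1 (Wf2 y + (π / 8) * Real.sin (2 * y)) y := by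
    intro y
    have hc : HasDerivAt (fun y : ℝ => -(π / 16) + (π / 16) * Real.cos (2 * y))
        (-(π / 8) * Real.sin (2 * y)) y := by
      have h2 : HasDerivAt (fun y : ℝ => 2 * y) 2 y := by simpa using (hasDerivAt_id y).const_mul 2
      have := ((Real.hasDerivAt_cos (2 * y)).comp y h2).const_mul (π / 16) |>.const_add (-(π / 16))
      exact this.congr_deriv (by ring)
    have := (hasDerivAt_Wf1 y).sub hc
    exact this.congr_deriv (by ring)
  set E : ℝ → ℝ := fun y => (D1 y) ^ 2 + 4 * (D y) ^ 2 with hE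
  have hEd : ∀ y : ℝ, HasDerivAt E
      (2 * D1 y * (Wf2 y + (π / 8) * Real.sin (2 * y)) + 4 * (2 * D y * D1 y)) y := by
    intro y
    exact (((hD1d y).pow 2).add (((hDd y).pow 2).const_mul 4)).congr_deriv (by ring)
  have hEzero : ∀ y ∈ Set.Icc (0:ℝ) π, E y = E 0 := by
    intro y hy
    have hdiff : DifferentiableOn ℝ E (Set.Icc 0 π) :=
      fun x _ => ((hEd x).differentiableAt).differentiableWithinAt
    refine constant_of_derivWithin_zero hdiff ?_ y hy
    intro x hx
    have hx' : x ∈ Set.Icc (0:ℝ) π := ⟨hx.1, hx.2.le⟩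
    have hkey : Wf2 x + (π / 8) * Real.sin (2 * x) + 4 * D x = 0 := by
      have hode := Wf2_add_four_Wf hx'.1 hx'.2
      simp only [hD, hT]
      linear_combination hode
    have : derivWithin E (Set.Icc 0 π) x
        = 2 * D1 x * (Wf2 x + (π / 8) * Real.sin (2 * x)) + 4 * (2 * D x * D1 x) :=
      ((hEd x).hasDerivWithinAt.derivWithin ((uniqueDiffOn_Icc Real.pi_pos) x hx'))
    rw [this]
    linear_combination (2 * D1 x) * hkey
  have hD0 : D 0 = 0 := by
    simp only [hD, hT]
    have : Wf 0 = π ^ 2 / 32 := by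
      unfold Wf
      have := hasSum_aco.tsum_eq
      rw [← this]
      congr 1
      funext n
      simp
    rw [this]
    simp
  have hD10 : D1 0 = 0 := by
    simp only [hD1]
    have : Wf1 0 = 0 := by
      unfold Wf1
      have : (fun n : ℕ => (-(aco n * (2 * (n:ℝ) + 1))) * Real.sin ((2 * (n:ℝ) + 1) * 0))
          = fun _ : ℕ => (0:ℝ) := by
        funext n; simp
      rw [this]
      exact tsum_zero
    rw [this]
    simp
  have hE0 : E 0 = 0 := by simp [hE, hD0, hD10]
  have hDφ : D φ = 0 := by
    have := hEzero φ ⟨h0, h1⟩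
    rw [hE0] at this
    have h1' : (D1 φ) ^ 2 + 4 * (D φ) ^ 2 = 0 := this
    nlinarith [sq_nonneg (D1 φ), sq_nonneg (D φ)]
  have : Wf φ - T φ = 0 := hDφ
  simp only [hT] at this
  linarith [this]

open MeasureTheory in
lemma ae_ne_pt (c : ℝ) : ∀ᵐ x : ℝ, x ≠ c := by
  rw [MeasureTheory.ae_iff]
  have : {x : ℝ | ¬ x ≠ c} = {c} := by ext x; simp
  rw [this]
  exact Real.volume_singleton

open MeasureTheory in
lemma sgn_integrable (c A B : ℝ) :
    IntervalIntegrable (fun x => if 0 ≤ Real.sin (x - c) then (1:ℝ) else -1) volume A B := by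
  have hmeas : Measurable (fun x : ℝ => if 0 ≤ Real.sin (x - c) then (1:ℝ) else -1) := by
    refine Measurable.ite ?_ measurable_const measurable_const
    exact measurableSet_le measurable_const
      ((Real.continuous_sin.comp (continuous_id.sub continuous_const)).measurable)
  rw [intervalIntegrable_iff]
  constructor
  · exact (hmeas.aestronglyMeasurable).restrict
  · haveI : IsFiniteMeasure (volume.restrict (Set.uIoc A B)) := by
      constructor
      rw [Measure.restrict_apply_univ]
      rw [Set.uIoc]
      rw [Real.volume_Ioc]
      exact ENNReal.ofReal_lt_top
    apply MeasureTheory.HasFiniteIntegral.of_bounded (C := 1)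
    filter_upwards with x
    rcases le_or_gt 0 (Real.sin (x - c)) with h | h
    · simp [h]
    · simp [not_le.mpr h]

/-- Inner integral evaluation. -/
lemma inner_eval {φ θB : ℝ} (hφ0 : 0 ≤ φ) (hφ1 : φ ≤ π) (hB0 : 0 ≤ θB) (hB1 : θB ≤ π/2) :
    ∫ θC in (0:ℝ)..(π/2), Real.sin (2*θB) * (if 0 ≤ Real.sin (θB + θC - φ) then (1:ℝ) else -1)
      = Real.sin (2*θB) * (π/2 - 2 * min (max (φ - θB) 0) (π/2)) := by
  have hpi := Real.pi_pos
  have hfun : (fun θC => Real.sin (2*θB) * (if 0 ≤ Real.sin (θB + θC - φ) then (1:ℝ) else -1))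
      = fun θC => Real.sin (2*θB) * (if 0 ≤ Real.sin (θC - (φ - θB)) then (1:ℝ) else -1) := by
    funext θC
    have : θB + θC - φ = θC - (φ - θB) := by ring
    rw [this]
  rw [hfun, intervalIntegral.integral_const_mul]
  set c : ℝ := φ - θB with hc
  have hcπ : c ≤ π := by simp only [hc]; linarith
  congr 1
  rcases le_or_gt c 0 with h0 | h0
  · -- c ≤ 0 : integrand ≡ 1
    have heq : ∫ θC in (0:ℝ)..(π/2), (if 0 ≤ Real.sin (θC - c) then (1:ℝ) else -1)
        = ∫ θC in (0:ℝ)..(π/2), (1:ℝ) := by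
      apply intervalIntegral.integral_congr
      intro θC hθC
      rw [Set.uIcc_of_le (by linarith)] at hθC
      have h1 : 0 ≤ θC - c := by have := hθC.1; linarith
      have h2 : θC - c ≤ π := by
        have := hθC.2
        simp only [hc] at *
        linarith
      simp [Real.sin_nonneg_of_nonneg_of_le_pi h1 h2]
    rw [heq]
    simp only [intervalIntegral.integral_const, smul_eq_mul, mul_one]
    rw [max_eq_right h0, min_eq_left (by positivity : (0:ℝ) ≤ π/2)]
    ring
  rcases le_or_gt (π/2) c with h2 | h2
  · -- π/2 ≤ c : integrand ≡ -1 a.e.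
    have heq : ∫ θC in (0:ℝ)..(π/2), (if 0 ≤ Real.sin (θC - c) then (1:ℝ) else -1)
        = ∫ θC in (0:ℝ)..(π/2), (-1:ℝ) := by
      apply intervalIntegral.integral_congr_ae
      filter_upwards [ae_ne_pt c] with x hx hmem
      rw [Set.uIoc_of_le (by linarith)] at hmem
      have hx1 : 0 < x := hmem.1
      have hx2 : x ≤ π/2 := hmem.2
      have harg1 : x - c < 0 := lt_of_le_of_ne (by linarith) (sub_ne_zero.mpr hx)
      have harg2 : -π < x - c := by linarith
      have hneg : Real.sin (x - c) < 0 := by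
        have : 0 < Real.sin (c - x) := Real.sin_pos_of_pos_of_lt_pi (by linarith) (by linarith)
        have hrw : Real.sin (x - c) = - Real.sin (c - x) := by
          rw [← Real.sin_neg]; congr 1; ring
        rw [hrw]; linarith
      rw [if_neg (not_le.mpr hneg)]
    rw [heq]
    simp only [intervalIntegral.integral_const, smul_eq_mul]
    rw [max_eq_left h0.le, min_eq_right h2]
    ring
  · -- 0 < c < π/2 : split at c
    rw [← intervalIntegral.integral_add_adjacent_intervals (a := (0:ℝ)) (b := c) (c := π/2)
      (sgn_integrable c 0 c) (sgn_integrable c c (π/2))]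
    have heq1 : ∫ θC in (0:ℝ)..c, (if 0 ≤ Real.sin (θC - c) then (1:ℝ) else -1)
        = ∫ θC in (0:ℝ)..c, (-1:ℝ) := by
      apply intervalIntegral.integral_congr_ae
      filter_upwards [ae_ne_pt c] with x hx hmem
      rw [Set.uIoc_of_le h0.le] at hmem
      have harg1 : x - c < 0 := lt_of_le_of_ne (by linarith [hmem.2]) (sub_ne_zero.mpr hx)
      have harg2 : -π < x - c := by have := hmem.1; linarith
      have hneg : Real.sin (x - c) < 0 := by
        have : 0 < Real.sin (c - x) := Real.sin_pos_of_pos_of_lt_pi (by linarith) (by linarith)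
        have hrw : Real.sin (x - c) = - Real.sin (c - x) := by
          rw [← Real.sin_neg]; congr 1; ring
        rw [hrw]; linarith
      rw [if_neg (not_le.mpr hneg)]
    have heq2 : ∫ θC in c..(π/2), (if 0 ≤ Real.sin (θC - c) then (1:ℝ) else -1)
        = ∫ θC in c..(π/2), (1:ℝ) := by
      apply intervalIntegral.integral_congr
      intro x hxm
      rw [Set.uIcc_of_le h2.le] at hxm
      have h1 : 0 ≤ x - c := by linarith [hxm.1]
      have h2' : x - c ≤ π := by linarith [hxm.2]
      simp [Real.sin_nonneg_of_nonneg_of_le_pi h1 h2']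
    rw [heq1, heq2]
    simp only [intervalIntegral.integral_const, smul_eq_mul, mul_one]
    rw [max_eq_left h0.le, min_eq_left h2.le]
    ring

lemma hasDerivAt_cos2 (θ : ℝ) : HasDerivAt (fun t : ℝ => Real.cos (2*t)) (-2*Real.sin (2*θ)) θ := by
  have h2 : HasDerivAt (fun t : ℝ => 2*t) 2 θ := by simpa using (hasDerivAt_id θ).const_mul 2
  have := (Real.hasDerivAt_cos (2*θ)).comp θ h2
  exact this.congr_deriv (by ring)

lemma hasDerivAt_sin2 (θ : ℝ) : HasDerivAt (fun t : ℝ => Real.sin (2*t)) (2*Real.cos (2*θ)) θ := by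
  have h2 : HasDerivAt (fun t : ℝ => 2*t) 2 θ := by simpa using (hasDerivAt_id θ).const_mul 2
  have := (Real.hasDerivAt_sin (2*θ)).comp θ h2
  exact this.congr_deriv (by ring)

lemma hasDerivAt_negcos2 (θ : ℝ) :
    HasDerivAt (fun t : ℝ => -(Real.cos (2*t))/2) (Real.sin (2*θ)) θ := by
  have hfe : (fun t : ℝ => -(Real.cos (2*t))/2) = fun t : ℝ => (-(1:ℝ)/2) * Real.cos (2*t) := by
    funext t; ring
  rw [hfe]
  have := (hasDerivAt_cos2 θ).const_mul (-(1:ℝ)/2)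
  exact this.congr_deriv (by ring)

lemma hasDerivAt_G (φ θ : ℝ) :
    HasDerivAt (fun t : ℝ => (π/2-2*φ)*(-(Real.cos (2*t))/2) + Real.sin (2*t)/2 - t*Real.cos (2*t))
      ((π/2 - 2*φ + 2*θ)*Real.sin (2*θ)) θ := by
  have h1 : HasDerivAt (fun t : ℝ => (-(π/2-2*φ)/2) * Real.cos (2*t))
      ((-(π/2-2*φ)/2) * (-2*Real.sin (2*θ))) θ := (hasDerivAt_cos2 θ).const_mul _
  have h2 : HasDerivAt (fun t : ℝ => (1/2 : ℝ) * Real.sin (2*t))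
      ((1/2 : ℝ)*(2*Real.cos (2*θ))) θ := (hasDerivAt_sin2 θ).const_mul _
  have h3 : HasDerivAt (fun t : ℝ => t * Real.cos (2*t))
      (1*Real.cos (2*θ) + θ*(-2*Real.sin (2*θ))) θ := by
    exact ((hasDerivAt_id θ).mul (hasDerivAt_cos2 θ)).congr_deriv (by simp)
  have hfe : (fun t : ℝ => (π/2-2*φ)*(-(Real.cos (2*t))/2) + Real.sin (2*t)/2 - t*Real.cos (2*t))
      = fun t : ℝ => ((-(π/2-2*φ)/2) * Real.cos (2*t) + (1/2 : ℝ) * Real.sin (2*t)) - t*Real.cos (2*t) := by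
    funext t; ring
  rw [hfe]
  have := (h1.add h2).sub h3
  exact this.congr_deriv (by ring)

lemma cont_clamp (φ : ℝ) :
    Continuous (fun θ : ℝ => Real.sin (2*θ) * (π/2 - 2 * min (max (φ - θ) 0) (π/2))) := by
  apply Continuous.mul
  · exact Real.continuous_sin.comp (continuous_const.mul continuous_id)
  · apply Continuous.sub continuous_const
    apply Continuous.mul continuous_const
    exact (((continuous_const.sub continuous_id).max continuous_const).min continuous_const)

/-- Outer integral evaluation. -/
lemma outer_eval {φ : ℝ} (h0 : 0 ≤ φ) (h1 : φ ≤ π) :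
    ∫ θ in (0:ℝ)..(π/2), Real.sin (2*θ) * (π/2 - 2 * min (max (φ - θ) 0) (π/2))
      = π/2 - φ + Real.sin (2*φ)/2 := by
  have hpi := Real.pi_pos
  rcases le_or_gt φ (π/2) with hle | hgt
  · -- split at φ
    rw [← intervalIntegral.integral_add_adjacent_intervals (a := (0:ℝ)) (b := φ) (c := π/2)
      ((cont_clamp φ).intervalIntegrable 0 φ) ((cont_clamp φ).intervalIntegrable φ (π/2))]
    have heq1 : ∫ θ in (0:ℝ)..φ, Real.sin (2*θ) * (π/2 - 2 * min (max (φ - θ) 0) (π/2))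
        = ∫ θ in (0:ℝ)..φ, (π/2 - 2*φ + 2*θ)*Real.sin (2*θ) := by
      apply intervalIntegral.integral_congr
      intro θ hθ
      rw [Set.uIcc_of_le h0] at hθ
      beta_reduce
      rw [max_eq_left (by linarith [hθ.2]), min_eq_left (by linarith [hθ.1])]
      ring
    have heq2 : ∫ θ in φ..(π/2), Real.sin (2*θ) * (π/2 - 2 * min (max (φ - θ) 0) (π/2))
        = ∫ θ in φ..(π/2), (π/2) * Real.sin (2*θ) := by
      apply intervalIntegral.integral_congr
      intro θ hθ
      rw [Set.uIcc_of_le hle] at hθ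
      beta_reduce
      rw [max_eq_right (by linarith [hθ.1]), min_eq_left (by positivity : (0:ℝ) ≤ π/2)]
      ring
    rw [heq1, heq2]
    rw [intervalIntegral.integral_eq_sub_of_hasDerivAt (fun t _ => hasDerivAt_G φ t)
      (Continuous.intervalIntegrable (by
        apply Continuous.mul
        · exact (continuous_const.add (continuous_const.mul continuous_id))
        · exact Real.continuous_sin.comp (continuous_const.mul continuous_id)) _ _)]
    rw [intervalIntegral.integral_const_mul,
      intervalIntegral.integral_eq_sub_of_hasDerivAt (fun t _ => hasDerivAt_negcos2 t)
      (Continuous.intervalIntegrable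
        (Real.continuous_sin.comp (continuous_const.mul continuous_id)) _ _)]
    simp only [show 2*(π/2) = π by ring, show 2*(0:ℝ) = 0 by ring, Real.cos_pi, Real.sin_pi,
      Real.cos_zero, Real.sin_zero]
    ring
  · -- π/2 < φ : split at φ - π/2
    have hb0 : 0 ≤ φ - π/2 := by linarith
    have hb1 : φ - π/2 ≤ π/2 := by linarith
    rw [← intervalIntegral.integral_add_adjacent_intervals (a := (0:ℝ)) (b := φ - π/2) (c := π/2)
      ((cont_clamp φ).intervalIntegrable 0 (φ - π/2)) ((cont_clamp φ).intervalIntegrable (φ - π/2) (π/2))]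
    have heq1 : ∫ θ in (0:ℝ)..(φ - π/2), Real.sin (2*θ) * (π/2 - 2 * min (max (φ - θ) 0) (π/2))
        = ∫ θ in (0:ℝ)..(φ - π/2), (-(π/2)) * Real.sin (2*θ) := by
      apply intervalIntegral.integral_congr
      intro θ hθ
      rw [Set.uIcc_of_le hb0] at hθ
      beta_reduce
      rw [max_eq_left (by linarith [hθ.2]), min_eq_right (by linarith [hθ.2])]
      ring
    have heq2 : ∫ θ in (φ - π/2)..(π/2), Real.sin (2*θ) * (π/2 - 2 * min (max (φ - θ) 0) (π/2))
        = ∫ θ in (φ - π/2)..(π/2), (π/2 - 2*φ + 2*θ)*Real.sin (2*θ) := by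
      apply intervalIntegral.integral_congr
      intro θ hθ
      rw [Set.uIcc_of_le hb1] at hθ
      beta_reduce
      rw [max_eq_left (by linarith [hθ.2]), min_eq_left (by linarith [hθ.1])]
      ring
    rw [heq1, heq2]
    rw [intervalIntegral.integral_const_mul,
      intervalIntegral.integral_eq_sub_of_hasDerivAt (fun t _ => hasDerivAt_negcos2 t)
      (Continuous.intervalIntegrable
        (Real.continuous_sin.comp (continuous_const.mul continuous_id)) _ _)]
    rw [intervalIntegral.integral_eq_sub_of_hasDerivAt (fun t _ => hasDerivAt_G φ t)
      (Continuous.intervalIntegrable (by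
        apply Continuous.mul
        · exact (continuous_const.add (continuous_const.mul continuous_id))
        · exact Real.continuous_sin.comp (continuous_const.mul continuous_id)) _ _)]
    simp only [show 2*(φ - π/2) = 2*φ - π by ring, show 2*(π/2) = π by ring,
      show 2*(0:ℝ) = 0 by ring, Real.cos_sub_pi, Real.sin_sub_pi, Real.cos_pi, Real.sin_pi,
      Real.cos_zero, Real.sin_zero]
    ring

/-- The main identity on `[0, π]`. -/
lemma main_on {φ : ℝ} (h0 : 0 ≤ φ) (h1 : φ ≤ π) :
    (2 / π) * ∫ θB in (0 : ℝ)..(π / 2), ∫ θC in (0 : ℝ)..(π / 2),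
        Real.sin (2 * θB) * (if 0 ≤ Real.sin (θB + θC - φ) then (1 : ℝ) else -1)
      = (32 / π ^ 2) * ∑' n : ℕ,
          (1 / ((2 * (n : ℝ) + 1) ^ 2 * (4 - (2 * (n : ℝ) + 1) ^ 2)))
            * Real.cos ((2 * (n : ℝ) + 1) * φ) := by
  have hpi := Real.pi_pos
  have houter : (∫ θB in (0 : ℝ)..(π / 2), ∫ θC in (0 : ℝ)..(π / 2),
      Real.sin (2 * θB) * (if 0 ≤ Real.sin (θB + θC - φ) then (1 : ℝ) else -1))
      = ∫ θB in (0 : ℝ)..(π / 2), Real.sin (2*θB) * (π/2 - 2 * min (max (φ - θB) 0) (π/2)) := by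
    apply intervalIntegral.integral_congr
    intro θB hθB
    rw [Set.uIcc_of_le (by positivity : (0:ℝ) ≤ π/2)] at hθB
    beta_reduce
    exact inner_eval h0 h1 hθB.1 hθB.2
  rw [houter, outer_eval h0 h1]
  have hsum : (∑' n : ℕ,
      (1 / ((2 * (n : ℝ) + 1) ^ 2 * (4 - (2 * (n : ℝ) + 1) ^ 2)))
        * Real.cos ((2 * (n : ℝ) + 1) * φ)) = Wf φ := rfl
  rw [hsum, Wf_eq h0 h1]
  field_simp
  ring

/-- Periodicity of the double integral. -/
lemma J_shift (φ : ℝ) (n : ℤ) :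
    (∫ θB in (0 : ℝ)..(π / 2), ∫ θC in (0 : ℝ)..(π / 2),
        Real.sin (2 * θB) * (if 0 ≤ Real.sin (θB + θC - (φ - n * (2*π))) then (1 : ℝ) else -1))
      = ∫ θB in (0 : ℝ)..(π / 2), ∫ θC in (0 : ℝ)..(π / 2),
        Real.sin (2 * θB) * (if 0 ≤ Real.sin (θB + θC - φ) then (1 : ℝ) else -1) := by
  apply intervalIntegral.integral_congr
  intro θB _
  beta_reduce
  apply intervalIntegral.integral_congr
  intro θC _
  beta_reduce
  rw [show θB + θC - (φ - n * (2*π)) = (θB + θC - φ) + n * (2*π) by ring,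
    Real.sin_add_int_mul_two_pi]

/-- Periodicity of the series. -/
lemma S_shift (φ : ℝ) (n : ℤ) :
    (∑' k : ℕ, (1 / ((2 * (k : ℝ) + 1) ^ 2 * (4 - (2 * (k : ℝ) + 1) ^ 2)))
        * Real.cos ((2 * (k : ℝ) + 1) * (φ - n * (2*π))))
      = ∑' k : ℕ, (1 / ((2 * (k : ℝ) + 1) ^ 2 * (4 - (2 * (k : ℝ) + 1) ^ 2)))
        * Real.cos ((2 * (k : ℝ) + 1) * φ) := by
  apply tsum_congr
  intro k
  congr 1
  rw [show (2 * (k : ℝ) + 1) * (φ - n * (2*π))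
      = (2 * (k : ℝ) + 1) * φ - (((2 * k + 1 : ℤ) * n : ℤ) : ℝ) * (2*π) by push_cast; ring,
    Real.cos_sub_int_mul_two_pi]

/-- Evenness of the double integral. -/
lemma J_even (φ : ℝ) :
    (∫ θB in (0 : ℝ)..(π / 2), ∫ θC in (0 : ℝ)..(π / 2),
        Real.sin (2 * θB) * (if 0 ≤ Real.sin (θB + θC - (-φ)) then (1 : ℝ) else -1))
      = ∫ θB in (0 : ℝ)..(π / 2), ∫ θC in (0 : ℝ)..(π / 2),
        Real.sin (2 * θB) * (if 0 ≤ Real.sin (θB + θC - φ) then (1 : ℝ) else -1) := by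
  have step1 : ∀ θB : ℝ,
      (∫ θC in (0:ℝ)..(π/2),
        Real.sin (2*θB) * (if 0 ≤ Real.sin (θB + θC + φ) then (1:ℝ) else -1))
      = ∫ θC in (0:ℝ)..(π/2),
        Real.sin (2*θB) * (if 0 ≤ Real.sin (θB + (π/2 - θC) + φ) then (1:ℝ) else -1) := by
    intro θB
    have h := intervalIntegral.integral_comp_sub_left (a := (0:ℝ)) (b := π/2)
      (fun x => Real.sin (2*θB) * (if 0 ≤ Real.sin (θB + x + φ) then (1:ℝ) else -1)) (π/2)
    rw [show π/2 - π/2 = (0:ℝ) by ring, sub_zero] at h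
    exact h.symm
  calc (∫ θB in (0 : ℝ)..(π / 2), ∫ θC in (0 : ℝ)..(π / 2),
        Real.sin (2 * θB) * (if 0 ≤ Real.sin (θB + θC - (-φ)) then (1 : ℝ) else -1))
      = ∫ θB in (0 : ℝ)..(π / 2), ∫ θC in (0 : ℝ)..(π / 2),
        Real.sin (2 * θB) * (if 0 ≤ Real.sin (θB + (π/2 - θC) + φ) then (1 : ℝ) else -1) := by
        apply intervalIntegral.integral_congr
        intro θB _
        beta_reduce
        rw [show (∫ θC in (0 : ℝ)..(π / 2),
            Real.sin (2 * θB) * (if 0 ≤ Real.sin (θB + θC - (-φ)) then (1 : ℝ) else -1))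
            = ∫ θC in (0 : ℝ)..(π / 2),
            Real.sin (2 * θB) * (if 0 ≤ Real.sin (θB + θC + φ) then (1 : ℝ) else -1) from by
          apply intervalIntegral.integral_congr
          intro θC _
          beta_reduce
          rw [show θB + θC - (-φ) = θB + θC + φ by ring]]
        exact step1 θB
    _ = ∫ θB in (0 : ℝ)..(π / 2), ∫ θC in (0 : ℝ)..(π / 2),
        Real.sin (2 * (π/2 - θB)) *
          (if 0 ≤ Real.sin ((π/2 - θB) + (π/2 - θC) + φ) then (1 : ℝ) else -1) := by
        have h := intervalIntegral.integral_comp_sub_left (a := (0:ℝ)) (b := π/2)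
          (fun y => ∫ θC in (0:ℝ)..(π/2),
            Real.sin (2*y) * (if 0 ≤ Real.sin (y + (π/2 - θC) + φ) then (1:ℝ) else -1)) (π/2)
        rw [show π/2 - π/2 = (0:ℝ) by ring, sub_zero] at h
        exact h.symm
    _ = ∫ θB in (0 : ℝ)..(π / 2), ∫ θC in (0 : ℝ)..(π / 2),
        Real.sin (2 * θB) * (if 0 ≤ Real.sin (θB + θC - φ) then (1 : ℝ) else -1) := by
        apply intervalIntegral.integral_congr
        intro θB _
        beta_reduce
        apply intervalIntegral.integral_congr
        intro θC _
        beta_reduce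
        rw [show 2 * (π/2 - θB) = π - 2*θB by ring, Real.sin_pi_sub,
          show (π/2 - θB) + (π/2 - θC) + φ = π - (θB + θC - φ) by ring, Real.sin_pi_sub]

/-- Evenness of the series. -/
lemma S_even (φ : ℝ) :
    (∑' k : ℕ, (1 / ((2 * (k : ℝ) + 1) ^ 2 * (4 - (2 * (k : ℝ) + 1) ^ 2)))
        * Real.cos ((2 * (k : ℝ) + 1) * (-φ)))
      = ∑' k : ℕ, (1 / ((2 * (k : ℝ) + 1) ^ 2 * (4 - (2 * (k : ℝ) + 1) ^ 2)))
        * Real.cos ((2 * (k : ℝ) + 1) * φ) := by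
  apply tsum_congr
  intro k
  congr 1
  rw [show (2 * (k : ℝ) + 1) * (-φ) = -((2 * (k : ℝ) + 1) * φ) by ring, Real.cos_neg]

/-- The double-integral form of the protocol correlation equals its Fourier series:
`E₁(φ) = (2/π)∫₀^{π/2}∫₀^{π/2} sin(2θ_B) sign(sin(θ_B+θ_C-φ)) dθ_B dθ_C
       = (32/π²) Σ_{n≥0} cos((2n+1)φ)/((2n+1)²(4-(2n+1)²))`. -/
theorem E1_integral_eq_series (φ : ℝ) :
    (2 / π) * ∫ θB in (0 : ℝ)..(π / 2), ∫ θC in (0 : ℝ)..(π / 2),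
        Real.sin (2 * θB) * (if 0 ≤ Real.sin (θB + θC - φ) then (1 : ℝ) else -1)
      = (32 / π ^ 2) * ∑' n : ℕ,
          (1 / ((2 * (n : ℝ) + 1) ^ 2 * (4 - (2 * (n : ℝ) + 1) ^ 2)))
            * Real.cos ((2 * (n : ℝ) + 1) * φ) := by
  have hpi := Real.pi_pos
  set n : ℤ := round (φ / (2*π)) with hn
  set ψ : ℝ := φ - n * (2*π) with hψdef
  have habs : |ψ| ≤ π := by
    have h1 := abs_sub_round (φ / (2*π))
    have he : ψ = (φ / (2*π) - n) * (2*π) := by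
      field_simp
      rw [hψdef]
      ring
    have h2 : |ψ| = |φ / (2*π) - n| * (2*π) := by
      rw [he, abs_mul, abs_of_pos (by positivity : (0:ℝ) < 2*π)]
    rw [h2]
    calc |φ / (2*π) - n| * (2*π) ≤ (1/2) * (2*π) := by
          apply mul_le_mul_of_nonneg_right h1 (by positivity)
      _ = π := by ring
  have hJ := J_shift φ n
  have hS := S_shift φ n
  rw [show φ - (n:ℝ) * (2*π) = ψ from rfl] at hJ hS
  rw [← hJ, ← hS]
  rcases le_or_gt 0 ψ with hψ0 | hψ0
  · exact main_on hψ0 (abs_le.mp habs).2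
  · have hneg : ψ = -(-ψ) := by ring
    rw [hneg, J_even, S_even]
    exact main_on (by linarith) (by linarith [(abs_le.mp habs).1])
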